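/- Let λ be a partition with at most n parts. If there exists a partition π (padded with zeros to n parts) with λ = 2π + (n, n−1, …, 1) componentwise, then ∫ s_λ(x_1,…,x_n) = (−1)^{n(n+1)/2} · s_π(x_1²,…,x_n²). If no such partition π exists, then ∫ s_λ(x_1,…,x_n) = 0. -/

import Mathlib

open MvPolynomial Finset

noncomputable section

abbrev Rn (n : ℕ) : Type := MvPolynomial (Fin n) ℚ
abbrev Kn (n : ℕ) : Type := FractionRing (Rn n)

/-- The canonical map from `R = ℚ[x_1,…,x_n]` to its fraction field. -/
def toK {n : ℕ} (f : Rn n) : Kn n := algebraMap (Rn n) (Kn n) f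

/-- The action of a sign vector `σ ∈ {±1}^n` (encoded by `σ : Fin n → Bool`,
with `true ↦ −1` and `false ↦ +1`) on `R`, by `x_i ↦ σ_i x_i`. -/
def sgnAct {n : ℕ} (σ : Fin n → Bool) : Rn n →ₐ[ℚ] Rn n :=
  aeval (fun i => if σ i then -X i else X i)

/-- `𝔯 = (−1)^D ∏_i (2x_i) ∏_{i<j} (x_i + x_j)` where `D = n(n+1)/2` (type `C_n`). -/
def frakrC (n : ℕ) : Rn n :=
  ((-1 : ℚ) ^ (n * (n + 1) / 2)) •
    ((∏ i : Fin n, (2 * X i)) *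
      ∏ p ∈ univ.filter (fun p : Fin n × Fin n => p.1 < p.2), (X p.1 + X p.2))

/-- `∫f = Σ_{σ∈{±1}^n} σ(f/𝔯)`, computed in the fraction field using
`σ(f/𝔯) = σ(f)/σ(𝔯)`. -/
def intC (n : ℕ) (f : Rn n) : Kn n :=
  ∑ σ : Fin n → Bool, toK (sgnAct σ f) / toK (sgnAct σ (frakrC n))

/-- `η = 2^{−N}(x_1+⋯+x_n)^N` where `N = n(n+1)/2 + 1`. -/
def etaC (n : ℕ) : Rn n :=
  (((2 : ℚ) ^ (n * (n + 1) / 2 + 1))⁻¹) • (∑ i : Fin n, X i) ^ (n * (n + 1) / 2 + 1)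

/-- `∂f = (1/2) Σ_i ∂f/∂x_i`. -/
def pdC {n : ℕ} (f : Rn n) : Rn n := (1 / 2 : ℚ) • ∑ i : Fin n, pderiv i f

/-- `∇(f) = ∫(η·∂f)`. -/
def nablaC (n : ℕ) (f : Rn n) : Kn n := intC n (etaC n * pdC f)

/-- The invariant ring `ℚ[p_1^{(2)},…,p_n^{(2)}]`, where `p_k^{(2)} = Σ_i x_i^{2k}`. -/
def algC (n : ℕ) : Subalgebra ℚ (Rn n) :=
  Algebra.adjoin ℚ (Set.range (fun k : Fin n => ∑ i : Fin n, X i ^ (2 * ((k : ℕ) + 1))))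

/-- The ideal `I` of the invariant ring consisting of elements with zero constant term. -/
def augC (n : ℕ) : Ideal ↥(algC n) :=
  RingHom.ker ((constantCoeff : Rn n →+* ℚ).comp (algC n).val.toRingHom)

/-- The alternant `a_α(y) = Σ_{ρ∈S_r} sgn(ρ) ∏_i y_{ρ(i)}^{α_i}`. -/
def alt {n : ℕ} (r : ℕ) (α : Fin r → ℕ) (y : Fin r → Rn n) : Rn n :=
  ∑ ρ : Equiv.Perm (Fin r), ((Equiv.Perm.sign ρ : ℤ)) • ∏ i, y (ρ i) ^ (α i)

/-- The Schur polynomial `s_λ(y) = a_{λ+δ_r}(y)/a_{δ_r}(y)` as an element of the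
fraction field. -/
def schurK {n : ℕ} (r : ℕ) (lam : Fin r → ℕ) (y : Fin r → Rn n) : Kn n :=
  toK (alt r (fun i => lam i + (r - 1 - (i : ℕ))) y) /
    toK (alt r (fun i => r - 1 - (i : ℕ)) y)

-- ===== auxiliary material =====
def cb (b : Bool) : ℚ := if b then -1 else 1
def eps {n : ℕ} (σ : Fin n → Bool) : ℚ := ∏ i, cb (σ i)

lemma cb_sq (b : Bool) : cb b * cb b = 1 := by cases b <;> simp [cb]

lemma eps_sq {n : ℕ} (σ : Fin n → Bool) : eps σ * eps σ = 1 := by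
  rw [eps, ← Finset.prod_mul_distrib]
  exact Finset.prod_eq_one (fun i _ => cb_sq _)

lemma sgnAct_X {n : ℕ} (σ : Fin n → Bool) (i : Fin n) :
    sgnAct σ (X i) = C (cb (σ i)) * X i := by
  rw [sgnAct, aeval_X]
  cases h : σ i <;> simp [cb, h]

lemma sgnAct_sgnAct {n : ℕ} (σ : Fin n → Bool) (f : Rn n) :
    sgnAct σ (sgnAct σ f) = f := by
  have h : (sgnAct σ).comp (sgnAct σ) = AlgHom.id ℚ (Rn n) := by
    apply MvPolynomial.algHom_ext
    intro i
    simp only [AlgHom.comp_apply, AlgHom.id_apply]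
    cases h : σ i <;> simp [sgnAct, aeval_X, h]
  calc sgnAct σ (sgnAct σ f) = ((sgnAct σ).comp (sgnAct σ)) f := rfl
    _ = f := by rw [h]; rfl

lemma sgnAct_injective {n : ℕ} (σ : Fin n → Bool) : Function.Injective (sgnAct σ) :=
  Function.LeftInverse.injective (sgnAct_sgnAct σ)

lemma sgnAct_alt {n : ℕ} (σ : Fin n → Bool) (r : ℕ) (α : Fin r → ℕ) (y : Fin r → Rn n) :
    sgnAct σ (alt r α y) = alt r α (fun i => sgnAct σ (y i)) := by
  simp only [alt, map_sum, map_zsmul, map_prod, map_pow]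

lemma alt_comp_perm {n r : ℕ} (α : Fin r → ℕ) (y : Fin r → Rn n) (τ : Equiv.Perm (Fin r)) :
    alt r (α ∘ τ) y = (Equiv.Perm.sign τ : ℤ) • alt r α y := by
  unfold alt
  have step1 : ∀ ρ : Equiv.Perm (Fin r),
      ∏ i, y (ρ i) ^ ((α ∘ τ) i) = ∏ j, y ((ρ * τ⁻¹) j) ^ (α j) := by
    intro ρ
    rw [← Equiv.prod_comp τ (fun j => y ((ρ * τ⁻¹) j) ^ (α j))]
    apply Finset.prod_congr rfl
    intro i _
    simp [Equiv.Perm.mul_apply, Function.comp]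
  calc (∑ ρ : Equiv.Perm (Fin r), ((Equiv.Perm.sign ρ : ℤ)) • ∏ i, y (ρ i) ^ ((α ∘ τ) i))
      = ∑ ρ : Equiv.Perm (Fin r), ((Equiv.Perm.sign ρ : ℤ)) • ∏ j, y ((ρ * τ⁻¹) j) ^ (α j) := by
        exact Finset.sum_congr rfl (fun ρ _ => by rw [step1])
    _ = ∑ ρ : Equiv.Perm (Fin r),
          ((Equiv.Perm.sign ((Equiv.mulRight τ) ρ) : ℤ)) • ∏ j, y (((Equiv.mulRight τ) ρ * τ⁻¹) j) ^ (α j) := by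
        exact (Equiv.sum_comp (Equiv.mulRight τ)
          (fun ρ => ((Equiv.Perm.sign ρ : ℤ)) • ∏ j, y ((ρ * τ⁻¹) j) ^ (α j))).symm
    _ = (Equiv.Perm.sign τ : ℤ) • ∑ ρ : Equiv.Perm (Fin r), ((Equiv.Perm.sign ρ : ℤ)) • ∏ i, y (ρ i) ^ (α i) := by
        rw [Finset.smul_sum]
        apply Finset.sum_congr rfl
        intro ρ _
        have h2 : (Equiv.mulRight τ) ρ * τ⁻¹ = ρ := by
          simp [Equiv.mulRight, mul_assoc]
        rw [h2, smul_smul]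
        congr 1
        simp only [Equiv.coe_mulRight, Equiv.Perm.sign_mul]
        push_cast
        ring

lemma alt_id_eq_vandermonde {n r : ℕ} (y : Fin r → Rn n) :
    alt r (fun i => (i : ℕ)) y = ∏ i : Fin r, ∏ j ∈ Ioi i, (y j - y i) := by
  rw [← Matrix.det_vandermonde y, Matrix.det_apply]
  unfold alt
  apply Finset.sum_congr rfl
  intro ρ _
  rw [Units.smul_def]
  rfl

lemma delta_comp_rev {r : ℕ} :
    (fun i : Fin r => r - 1 - (i : ℕ)) ∘ (Fin.revPerm : Equiv.Perm (Fin r)) = (fun i : Fin r => (i : ℕ)) := by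
  funext i
  have := i.isLt
  simp only [Function.comp, Fin.revPerm_apply, Fin.val_rev]
  omega

lemma alt_delta {n r : ℕ} (y : Fin r → Rn n) :
    alt r (fun i => r - 1 - (i : ℕ)) y
      = (Equiv.Perm.sign (Fin.revPerm : Equiv.Perm (Fin r)) : ℤ) •
          ∏ i : Fin r, ∏ j ∈ Ioi i, (y j - y i) := by
  have h := alt_comp_perm (fun i : Fin r => r - 1 - (i : ℕ)) y (Fin.revPerm)
  rw [delta_comp_rev, alt_id_eq_vandermonde] at h
  have hs : ((Equiv.Perm.sign (Fin.revPerm : Equiv.Perm (Fin r)) : ℤ)) •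
      ((Equiv.Perm.sign (Fin.revPerm : Equiv.Perm (Fin r)) : ℤ) • alt r (fun i => r - 1 - (i : ℕ)) y)
      = alt r (fun i => r - 1 - (i : ℕ)) y := by
    rw [smul_smul]
    have h1 : ((Equiv.Perm.sign (Fin.revPerm : Equiv.Perm (Fin r)) : ℤ)) *
        (Equiv.Perm.sign (Fin.revPerm : Equiv.Perm (Fin r)) : ℤ) = 1 := by
      rcases Int.units_eq_one_or (Equiv.Perm.sign (Fin.revPerm : Equiv.Perm (Fin r))) with h1 | h1 <;>
        rw [h1] <;> norm_num
    rw [h1, one_smul]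
  rw [← hs, h]
lemma sum_cb_pow {e : ℕ} : (∑ b : Bool, cb b ^ e) = 1 + (-1:ℚ)^e := by
  rw [Fintype.sum_bool]
  simp [cb]
  ring

lemma scalar_sum {n : ℕ} (α : Fin n → ℕ) (ρ : Equiv.Perm (Fin n)) :
    (∑ σ : Fin n → Bool, eps σ * ∏ i, cb (σ (ρ i)) ^ α i)
      = ∏ i, (1 + (-1:ℚ)^(α i + 1)) := by
  have h1 : ∀ σ : Fin n → Bool, eps σ * ∏ i, cb (σ (ρ i)) ^ α i
      = ∏ j, cb (σ j) ^ (α (ρ.symm j) + 1) := by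
    intro σ
    have he : eps σ = ∏ i, cb (σ (ρ i)) := (Equiv.prod_comp ρ (fun j => cb (σ j))).symm
    rw [he, ← Finset.prod_mul_distrib]
    rw [← Equiv.prod_comp ρ (fun j => cb (σ j) ^ (α (ρ.symm j) + 1))]
    apply Finset.prod_congr rfl
    intro i _
    rw [Equiv.symm_apply_apply, pow_succ]
    ring
  rw [Finset.sum_congr rfl (fun σ _ => h1 σ)]
  rw [← Fintype.prod_sum (fun j (b : Bool) => cb b ^ (α (ρ.symm j) + 1))]
  rw [← Equiv.prod_comp ρ.symm (fun i => (1 + (-1:ℚ)^(α i + 1)))]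
  apply Finset.prod_congr rfl
  intro j _
  exact sum_cb_pow

lemma sum_eps_sgnAct {n : ℕ} (α : Fin n → ℕ) :
    (∑ σ : Fin n → Bool, C (eps σ) * sgnAct σ (alt n α (fun i => X i)) : Rn n)
      = C (∏ i, (1 + (-1:ℚ)^(α i + 1))) * alt n α (fun i => X i) := by
  have hA : ∀ (σ : Fin n → Bool) (ρ : Equiv.Perm (Fin n)),
      sgnAct σ (∏ i, (X (ρ i) : Rn n) ^ α i)
        = C (∏ i, cb (σ (ρ i)) ^ α i) * ∏ i, (X (ρ i) : Rn n) ^ α i := by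
    intro σ ρ
    rw [map_prod]
    have h : ∀ i : Fin n, sgnAct σ ((X (ρ i) : Rn n) ^ α i)
        = C (cb (σ (ρ i)) ^ α i) * (X (ρ i) : Rn n) ^ α i := by
      intro i; rw [map_pow, sgnAct_X, mul_pow, ← map_pow]
    rw [Finset.prod_congr rfl (fun i _ => h i), Finset.prod_mul_distrib, ← map_prod]
  calc (∑ σ : Fin n → Bool, C (eps σ) * sgnAct σ (alt n α (fun i => X i)) : Rn n)
      = ∑ σ : Fin n → Bool, ∑ ρ : Equiv.Perm (Fin n),
          ((Equiv.Perm.sign ρ : ℤ)) • (C (eps σ * ∏ i, cb (σ (ρ i)) ^ α i) * ∏ i, (X (ρ i) : Rn n) ^ α i) := by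
        apply Finset.sum_congr rfl
        intro σ _
        rw [alt, map_sum, Finset.mul_sum]
        apply Finset.sum_congr rfl
        intro ρ _
        rw [map_zsmul, hA σ ρ, mul_smul_comm, map_mul]
        ring_nf
    _ = ∑ ρ : Equiv.Perm (Fin n), ((Equiv.Perm.sign ρ : ℤ)) •
          (C (∑ σ : Fin n → Bool, eps σ * ∏ i, cb (σ (ρ i)) ^ α i) * ∏ i, (X (ρ i) : Rn n) ^ α i) := by
        rw [Finset.sum_comm]
        apply Finset.sum_congr rfl
        intro ρ _
        rw [← Finset.smul_sum, map_sum, Finset.sum_mul]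
    _ = C (∏ i, (1 + (-1:ℚ)^(α i + 1))) * alt n α (fun i => X i) := by
        rw [alt, Finset.mul_sum]
        apply Finset.sum_congr rfl
        intro ρ _
        rw [scalar_sum α ρ, mul_smul_comm]
lemma alt_odd {n r : ℕ} (μ : Fin r → ℕ) (y : Fin r → Rn n) :
    alt r (fun i => 2 * μ i + 1) y = (∏ j, y j) * alt r μ (fun j => y j ^ 2) := by
  unfold alt
  rw [Finset.mul_sum]
  apply Finset.sum_congr rfl
  intro ρ _
  rw [mul_smul_comm]
  congr 1
  have h1 : ∏ i, y (ρ i) ^ (2 * μ i + 1) = ∏ i, (y (ρ i) * (y (ρ i) ^ 2) ^ (μ i)) := by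
    apply Finset.prod_congr rfl
    intro i _
    rw [← pow_mul, pow_succ]
    ring
  rw [h1, Finset.prod_mul_distrib, Equiv.prod_comp ρ (fun j => y j)]

lemma prod_pairs {M : Type*} [CommMonoid M] {r : ℕ} (f : Fin r → Fin r → M) :
    ∏ p ∈ univ.filter (fun p : Fin r × Fin r => p.1 < p.2), f p.1 p.2
      = ∏ i : Fin r, ∏ j ∈ Ioi i, f i j := by
  rw [Finset.prod_sigma']
  refine Finset.prod_nbij' (s := univ.filter (fun p : Fin r × Fin r => p.1 < p.2))
    (t := Finset.univ.sigma (fun i => Ioi i))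
    (f := fun p => f p.1 p.2) (g := fun x => f x.1 x.2)
    (fun p => ⟨p.1, p.2⟩) (fun x => (x.1, x.2)) ?_ ?_ ?_ ?_ ?_
  · intro p hp
    simp only [Finset.mem_filter, Finset.mem_univ, true_and] at hp
    simp [Finset.mem_sigma, Finset.mem_Ioi, hp]
  · intro x hx
    simp only [Finset.mem_sigma, Finset.mem_univ, Finset.mem_Ioi, true_and] at hx
    simp [hx]
  · intro p _; rfl
  · intro x _; rfl
  · intro p _; rfl
lemma prod_two_X {n : ℕ} : (∏ i : Fin n, (2 * X i) : Rn n) = C ((2:ℚ)^n) * ∏ i : Fin n, X i := by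
  rw [Finset.prod_mul_distrib, Finset.prod_const, card_univ, Fintype.card_fin, map_pow]
  have h2 : (C (2:ℚ) : Rn n) = 2 := by
    rw [show (2:ℚ) = 1 + 1 by norm_num, map_add, map_one]
    norm_num
  rw [h2]

lemma core_identity (n : ℕ) :
    alt n (fun i => n - 1 - (i:ℕ)) (fun i => (X i : Rn n)) * frakrC n
      = C ((-1:ℚ) ^ (n*(n+1)/2) * 2 ^ n) *
        ((∏ i : Fin n, X i) * alt n (fun i => n - 1 - (i:ℕ)) (fun i => (X i : Rn n) ^ 2)) := by
  rw [alt_delta, alt_delta, frakrC, smul_eq_C_mul, prod_two_X, prod_pairs (fun i j => (X i + X j : Rn n))]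
  rw [zsmul_eq_mul, zsmul_eq_mul]
  have key : (∏ i : Fin n, ∏ j ∈ Ioi i, ((X j : Rn n) - X i)) *
      (∏ i : Fin n, ∏ j ∈ Ioi i, ((X i : Rn n) + X j))
      = ∏ i : Fin n, ∏ j ∈ Ioi i, ((X j : Rn n) ^ 2 - (X i) ^ 2) := by
    rw [← Finset.prod_mul_distrib]
    apply Finset.prod_congr rfl
    intro i _
    rw [← Finset.prod_mul_distrib]
    apply Finset.prod_congr rfl
    intro j _
    ring
  have hc : (C ((-1:ℚ) ^ (n*(n+1)/2) * 2 ^ n) : Rn n)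
      = C ((-1:ℚ) ^ (n*(n+1)/2)) * C ((2:ℚ)^n) := by rw [← map_mul]
  rw [hc]
  linear_combination (((Equiv.Perm.sign (Fin.revPerm : Equiv.Perm (Fin n)) : ℤ) : Rn n) *
    C ((-1:ℚ) ^ (n*(n+1)/2)) * C ((2:ℚ)^n) * (∏ i : Fin n, X i)) * key
lemma toK_mul {n : ℕ} (a b : Rn n) : toK (a * b) = toK a * toK b := map_mul _ _ _

lemma toK_sum {n : ℕ} {ι : Type*} (t : Finset ι) (g : ι → Rn n) :
    toK (∑ i ∈ t, g i) = ∑ i ∈ t, toK (g i) := map_sum _ _ _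

lemma toK_injective {n : ℕ} : Function.Injective (toK (n := n)) :=
  IsFractionRing.injective (Rn n) (Kn n)

lemma toK_ne_zero {n : ℕ} {f : Rn n} (h : f ≠ 0) : toK f ≠ 0 := by
  intro h0
  exact h (toK_injective (by rw [h0, toK, map_zero]))

lemma sgnAct_ne_zero {n : ℕ} (σ : Fin n → Bool) {f : Rn n} (h : f ≠ 0) : sgnAct σ f ≠ 0 := by
  intro h0
  exact h (sgnAct_injective σ (by rw [h0, map_zero]))

lemma V1_ne_zero (n : ℕ) : (∏ i : Fin n, ∏ j ∈ Ioi i, ((X j : Rn n) - X i)) ≠ 0 := by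
  rw [Finset.prod_ne_zero_iff]
  intro i _
  rw [Finset.prod_ne_zero_iff]
  intro j hj
  rw [Finset.mem_Ioi] at hj
  exact sub_ne_zero.mpr (fun h => (ne_of_gt hj) (MvPolynomial.X_injective h))

lemma V2_ne_zero (n : ℕ) : (∏ i : Fin n, ∏ j ∈ Ioi i, ((X j : Rn n) ^ 2 - (X i) ^ 2)) ≠ 0 := by
  rw [Finset.prod_ne_zero_iff]
  intro i _
  rw [Finset.prod_ne_zero_iff]
  intro j hj
  rw [Finset.mem_Ioi] at hj
  intro h
  have h2 := congrArg (eval (fun k : Fin n => ((k : ℕ) + 1 : ℚ))) h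
  simp only [map_sub, map_pow, eval_X, map_zero] at h2
  have hij : ((i : ℕ) : ℚ) < ((j : ℕ) : ℚ) := by exact_mod_cast hj
  nlinarith [h2, hij]

lemma sign_smul_ne_zero {n : ℕ} (u : ℤˣ) {f : Rn n} (h : f ≠ 0) : (u : ℤ) • f ≠ 0 :=
  smul_ne_zero (Units.ne_zero u) h

lemma Ddelta_ne_zero (n : ℕ) : alt n (fun i => n - 1 - (i:ℕ)) (fun i => (X i : Rn n)) ≠ 0 := by
  rw [alt_delta]
  exact sign_smul_ne_zero _ (V1_ne_zero n)

lemma altdelta2_ne_zero (n : ℕ) : alt n (fun i => n - 1 - (i:ℕ)) (fun i => (X i : Rn n) ^ 2) ≠ 0 := by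
  rw [alt_delta]
  exact sign_smul_ne_zero _ (V2_ne_zero n)

lemma frakrC_ne_zero (n : ℕ) : frakrC n ≠ 0 := by
  rw [frakrC, smul_eq_C_mul]
  apply mul_ne_zero
  · intro h
    have h1 : ((-1:ℚ) ^ (n*(n+1)/2)) = 0 := MvPolynomial.C_injective _ _ (by rw [h, map_zero])
    have h2 : ((-1:ℚ) ^ (n*(n+1)/2)) ≠ 0 := by positivity
    exact h2 h1
  apply mul_ne_zero
  · rw [Finset.prod_ne_zero_iff]
    intro i _
    apply mul_ne_zero
    · exact two_ne_zero
    · exact MvPolynomial.X_ne_zero i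
  · rw [Finset.prod_ne_zero_iff]
    intro p _
    intro h
    have h2 := congrArg (eval (fun _ : Fin n => (1 : ℚ))) h
    simp only [map_add, eval_X, map_zero] at h2
    norm_num at h2
lemma sgnAct_C {n : ℕ} (σ : Fin n → Bool) (a : ℚ) : sgnAct σ (C a) = C a := by
  simp [sgnAct, MvPolynomial.aeval_C, MvPolynomial.algebraMap_eq]

lemma sgnAct_prod_X {n : ℕ} (σ : Fin n → Bool) :
    sgnAct σ (∏ i : Fin n, X i) = C (eps σ) * ∏ i : Fin n, X i := by
  rw [map_prod]
  rw [Finset.prod_congr rfl (fun i (_ : i ∈ univ) => sgnAct_X σ i), Finset.prod_mul_distrib,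
    ← map_prod, eps]

lemma sgnAct_X_sq {n : ℕ} (σ : Fin n → Bool) (i : Fin n) :
    sgnAct σ ((X i : Rn n) ^ 2) = X i ^ 2 := by
  rw [map_pow, sgnAct_X, mul_pow, ← map_pow, pow_two, cb_sq, map_one, one_mul]

lemma sgnAct_altdelta2 {n : ℕ} (σ : Fin n → Bool) (β : Fin n → ℕ) :
    sgnAct σ (alt n β (fun i => (X i : Rn n) ^ 2)) = alt n β (fun i => (X i : Rn n) ^ 2) := by
  rw [sgnAct_alt]
  congr 1
  funext i
  exact sgnAct_X_sq σ i

lemma equivariance {n : ℕ} (σ : Fin n → Bool) :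
    sgnAct σ (alt n (fun i => n - 1 - (i:ℕ)) (fun i => (X i : Rn n)) * frakrC n)
      = C (eps σ) * (alt n (fun i => n - 1 - (i:ℕ)) (fun i => (X i : Rn n)) * frakrC n) := by
  rw [core_identity n, map_mul (sgnAct σ), map_mul (sgnAct σ), sgnAct_C, sgnAct_prod_X, sgnAct_altdelta2]
  ring

lemma intC_formula {n : ℕ} (s A : Rn n)
    (hsD : s * alt n (fun i => n - 1 - (i:ℕ)) (fun i => (X i : Rn n)) = A) :
    intC n s = toK (∑ σ : Fin n → Bool, C (eps σ) * sgnAct σ A)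
      / toK (alt n (fun i => n - 1 - (i:ℕ)) (fun i => (X i : Rn n)) * frakrC n) := by
  set Dd := alt n (fun i => n - 1 - (i:ℕ)) (fun i => (X i : Rn n)) with hDd
  rw [intC, toK_sum, Finset.sum_div]
  apply Finset.sum_congr rfl
  intro σ _
  have hDσ : toK (sgnAct σ Dd) ≠ 0 := toK_ne_zero (sgnAct_ne_zero σ (Ddelta_ne_zero n))
  have h1 : toK (sgnAct σ s) = toK (sgnAct σ A) / toK (sgnAct σ Dd) := by
    rw [eq_div_iff hDσ, ← toK_mul, ← map_mul, hsD]
  rw [h1, div_div, ← toK_mul, ← map_mul, equivariance σ, toK_mul]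
  have he : toK (C (eps σ) : Rn n) * toK (C (eps σ) : Rn n) = 1 := by
    rw [← toK_mul, ← map_mul, eps_sq, map_one, toK, map_one]
  have hinv : (toK (C (eps σ) : Rn n))⁻¹ = toK (C (eps σ) : Rn n) :=
    inv_eq_of_mul_eq_one_right he
  rw [← div_div, div_eq_mul_inv (toK (sgnAct σ A)), hinv, mul_comm, ← toK_mul]
lemma toK_C_neg_one_pow {n k : ℕ} : toK (C ((-1:ℚ)^k) : Rn n) = (-1 : Kn n)^k := by
  rw [map_pow, map_neg, map_one, toK, map_pow, map_neg, map_one]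

lemma lam_lower {n : ℕ} (lam : Fin n → ℕ) (hlam : Antitone lam)
    (hodd : ∀ i : Fin n, Odd (lam i + (n - 1 - (i:ℕ)))) :
    ∀ i : Fin n, n - (i:ℕ) ≤ lam i := by
  have key : ∀ m : ℕ, ∀ i : Fin n, n - 1 - (i:ℕ) = m → n - (i:ℕ) ≤ lam i := by
    intro m
    induction m with
    | zero =>
      intro i hi
      rcases hodd i with ⟨k, hk⟩
      have := i.isLt
      omega
    | succ m ih =>
      intro i hi
      have hlt : (i:ℕ) + 1 < n := by have := i.isLt; omega
      have h2 := ih ⟨(i:ℕ)+1, hlt⟩ (by simp; omega)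
      have h3 : lam ⟨(i:ℕ)+1, hlt⟩ ≤ lam i := hlam (by rw [Fin.le_def]; simp)
      rcases hodd i with ⟨k, hk⟩
      rcases hodd ⟨(i:ℕ)+1, hlt⟩ with ⟨l, hl⟩
      have hco : ((⟨(i:ℕ)+1, hlt⟩ : Fin n) : ℕ) = (i:ℕ)+1 := rfl
      rw [hco] at h2 hl
      have := i.isLt
      omega
  exact fun i => key (n - 1 - (i:ℕ)) i rfl

lemma lam_gap {n : ℕ} (lam : Fin n → ℕ) (hlam : Antitone lam)
    (hodd : ∀ i : Fin n, Odd (lam i + (n - 1 - (i:ℕ)))) :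
    ∀ i j : Fin n, (i:ℕ) ≤ (j:ℕ) → lam j + ((j:ℕ) - (i:ℕ)) ≤ lam i := by
  have step : ∀ (i j : Fin n), (j:ℕ) = (i:ℕ) + 1 → lam j + 1 ≤ lam i := by
    intro i j hij
    have h3 : lam j ≤ lam i := hlam (by rw [Fin.le_def]; omega)
    rcases hodd i with ⟨k, hk⟩
    rcases hodd j with ⟨l, hl⟩
    have := j.isLt
    omega
  have key : ∀ d : ℕ, ∀ i j : Fin n, (j:ℕ) = (i:ℕ) + d → lam j + d ≤ lam i := by
    intro d
    induction d with
    | zero =>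
      intro i j h
      have : j = i := Fin.ext (by omega)
      subst this
      omega
    | succ d ih =>
      intro i j h
      have hlt : (i:ℕ) + 1 < n := by have := j.isLt; omega
      have h1 := step i ⟨(i:ℕ)+1, hlt⟩ rfl
      have h2 := ih ⟨(i:ℕ)+1, hlt⟩ j (by simp; omega)
      omega
  intro i j hij
  have := key ((j:ℕ) - (i:ℕ)) i j (by omega)
  omega

lemma exists_pi {n : ℕ} (lam : Fin n → ℕ) (hlam : Antitone lam)
    (hodd : ∀ i : Fin n, Odd (lam i + (n - 1 - (i:ℕ)))) :
    ∃ π : Fin n → ℕ, Antitone π ∧ ∀ i, lam i = 2 * π i + (n - (i : ℕ)) := by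
  have hlow := lam_lower lam hlam hodd
  refine ⟨fun i => (lam i - (n - (i:ℕ))) / 2, ?_, ?_⟩
  · intro i j hij
    have hij' : (i:ℕ) ≤ (j:ℕ) := hij
    have hg := lam_gap lam hlam hodd i j hij'
    have hi := hlow i
    have hj := hlow j
    have hvi := i.isLt
    have hvj := j.isLt
    rcases hodd i with ⟨k, hk⟩
    rcases hodd j with ⟨l, hl⟩
    show (lam j - (n - (j:ℕ))) / 2 ≤ (lam i - (n - (i:ℕ))) / 2
    omega
  · intro i
    have hi := hlow i
    have hvi := i.isLt
    rcases hodd i with ⟨k, hk⟩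
    show lam i = 2 * ((lam i - (n - (i:ℕ))) / 2) + (n - (i:ℕ))
    omega

/-- for a partition `λ` with at most `n` parts:
if `λ = 2π + (n, n−1, …, 1)` for a partition `π` then
`∫ s_λ(x_1,…,x_n) = (−1)^{n(n+1)/2} s_π(x_1²,…,x_n²)`, and if no such `π` exists
then `∫ s_λ(x_1,…,x_n) = 0`. -/
theorem stmt_5 (n : ℕ) (hn : 2 ≤ n) (lam : Fin n → ℕ) (hlam : Antitone lam)
    (s : Rn n) (hs : toK s = schurK n lam (fun i => X i)) :
    (∀ π : Fin n → ℕ, Antitone π → (∀ i, lam i = 2 * π i + (n - (i : ℕ))) →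
      intC n s = ((-1 : Kn n) ^ (n * (n + 1) / 2)) *
        schurK n π (fun i => X i ^ 2)) ∧
    ((¬ ∃ π : Fin n → ℕ, Antitone π ∧ ∀ i, lam i = 2 * π i + (n - (i : ℕ))) →
      intC n s = 0) := by
  have hDne : toK (alt n (fun i => n - 1 - (i:ℕ)) (fun i => (X i : Rn n))) ≠ 0 :=
    toK_ne_zero (Ddelta_ne_zero n)
  rw [schurK] at hs
  have hsD : s * alt n (fun i => n - 1 - (i:ℕ)) (fun i => (X i : Rn n))
      = alt n (fun i => lam i + (n - 1 - (i:ℕ))) (fun i => (X i : Rn n)) := by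
    apply toK_injective
    rw [toK_mul, hs, div_mul_cancel₀ _ hDne]
  have hint := intC_formula s _ hsD
  constructor
  · intro π hπa hπ
    have hα : (fun i : Fin n => lam i + (n - 1 - (i:ℕ)))
        = (fun i : Fin n => 2 * (π i + (n - 1 - (i:ℕ))) + 1) := by
      funext i
      have h1 := i.isLt
      have h2 := hπ i
      omega
    rw [hint, hα, sum_eps_sgnAct]
    have hconst : (∏ i : Fin n, (1 + (-1:ℚ) ^ (2 * (π i + (n - 1 - (i:ℕ))) + 1 + 1))) = 2^n := by
      rw [Finset.prod_congr rfl (fun i (_ : i ∈ univ) =>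
        show (1 + (-1:ℚ) ^ (2 * (π i + (n - 1 - (i:ℕ))) + 1 + 1)) = 2 from by
          rw [show 2 * (π i + (n - 1 - (i:ℕ))) + 1 + 1 = 2 * (π i + (n - 1 - (i:ℕ)) + 1) by ring,
            pow_mul]
          norm_num)]
      rw [Finset.prod_const, card_univ, Fintype.card_fin]
    rw [hconst, alt_odd]
    beta_reduce
    rw [schurK]
    rw [show ((-1 : Kn n)) ^ (n*(n+1)/2) = toK (C ((-1:ℚ)^(n*(n+1)/2)) : Rn n) from
      (toK_C_neg_one_pow).symm]
    rw [mul_div_assoc']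
    rw [← toK_mul]
    rw [div_eq_div_iff (toK_ne_zero (mul_ne_zero (Ddelta_ne_zero n) (frakrC_ne_zero n)))
      (toK_ne_zero (altdelta2_ne_zero n))]
    rw [← toK_mul, ← toK_mul]
    apply congrArg toK
    rw [core_identity n]
    have hcc : (C ((-1:ℚ)^(n*(n+1)/2)) : Rn n) * C ((-1:ℚ)^(n*(n+1)/2) * 2^n) = C ((2:ℚ)^n) := by
      rw [← map_mul]
      congr 1
      rw [← mul_assoc, ← mul_pow]
      norm_num
    linear_combination (-( (∏ i : Fin n, (X i : Rn n)) *
      (alt n (fun i => π i + (n - 1 - (i:ℕ))) (fun i => (X i : Rn n) ^ 2)) *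
      (alt n (fun i => n - 1 - (i:ℕ)) (fun i => (X i : Rn n) ^ 2)))) * hcc
  · intro hne
    have hev : ∃ i : Fin n, Even (lam i + (n - 1 - (i:ℕ))) := by
      by_contra h
      push_neg at h
      exact hne (exists_pi lam hlam (fun i => Nat.not_even_iff_odd.mp (h i)))
    obtain ⟨i0, he⟩ := hev
    rw [hint, sum_eps_sgnAct]
    have hzero : (∏ i : Fin n, (1 + (-1:ℚ) ^ (lam i + (n - 1 - (i:ℕ)) + 1))) = 0 := by
      apply Finset.prod_eq_zero (Finset.mem_univ i0)
      rw [Odd.neg_one_pow (he.add_one)]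
      ring
    rw [hzero, map_zero, zero_mul]
    rw [show toK (0 : Rn n) = 0 from map_zero _, zero_div]

end
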